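/- Let G be a finite cyclic group of order m with gcd(m, 6) = 1 and generator g. Then u = 1 - g + g^2 is a unit of ZG of augmentation 1, and u does not satisfy PAP(2): there exists an element c of G with \varepsilon_{\{c\}}(u^2) \ne \sum_{d : d^2 = c} \varepsilon_{\{d\}}(u). -/

import Mathlib

open Finset MonoidAlgebra
open scoped Classical

noncomputable section

open Polynomial in
lemma phi_dvd_six_aux (k : ℕ) : (X^2 - X + 1 : ℤ[X]) ∣ X^(6*k) - 1 := by
  have h1 : (X^2 - X + 1 : ℤ[X]) ∣ X^6 - 1 := ⟨X^4 + X^3 - X - 1, by ring⟩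
  have h2 : (X^6 - 1 : ℤ[X]) ∣ X^(6*k) - 1 := by
    simpa [pow_mul] using sub_dvd_pow_sub_pow (X^6 : ℤ[X]) 1 k
  exact h1.trans h2

open Polynomial in
lemma phi_case1_aux (k : ℕ) : (X^2 - X + 1 : ℤ[X]) ∣ X^(6*k+2) - X + 1 := by
  have h := (phi_dvd_six_aux k).mul_left (X^2 : ℤ[X])
  have he : (X^(6*k+2) - X + 1 : ℤ[X]) = X^2 * (X^(6*k) - 1) + (X^2 - X + 1) := by ring
  rw [he]; exact dvd_add h dvd_rfl

open Polynomial in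
lemma phi_case5_aux (k : ℕ) : (X^2 - X + 1 : ℤ[X]) ∣ -X^(6*k+6) + X^(6*k+5) + X := by
  have h := (phi_dvd_six_aux k).mul_left (X^5 - X^6 : ℤ[X])
  have h2 : (X^2 - X + 1 : ℤ[X]) ∣ -X^6 + X^5 + X := ⟨-X^4 + X^2 + X, by ring⟩
  have he : (-X^(6*k+6) + X^(6*k+5) + X : ℤ[X])
      = (X^5 - X^6) * (X^(6*k) - 1) + (-X^6 + X^5 + X) := by ring
  rw [he]; exact dvd_add h h2

lemma MA_sub_apply_aux {G : Type*} [CommGroup G] (f h : MonoidAlgebra ℤ G) (x : G) :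
    (f - h).coeff x = f.coeff x - h.coeff x := by
  rw [MonoidAlgebra.coeff_sub]; exact Finsupp.sub_apply _ _ x

lemma MA_add_apply_aux {G : Type*} [CommGroup G] (f h : MonoidAlgebra ℤ G) (x : G) :
    (f + h).coeff x = f.coeff x + h.coeff x := by
  rw [MonoidAlgebra.coeff_add]; exact Finsupp.add_apply _ _ x

lemma MA_single_apply_aux {G : Type*} [CommGroup G] (a x : G) (b : ℤ) :
    (MonoidAlgebra.single a b : MonoidAlgebra ℤ G).coeff x = if a = x then b else 0 := by
  rw [MonoidAlgebra.coeff_single]; exact Finsupp.single_apply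

/-- In a cyclic group `G = ⟨g⟩` of order `m` coprime to `6`, the element
`u = 1 - g + g²` is an augmentation-one unit of `ℤG` which fails `PAP(2)`:
for some `c ∈ G` the coefficient of `u²` at `c` differs from the sum of the
coefficients of `u` at the square roots of `c`. -/
theorem unit_one_sub_g_add_gsq_not_PAP2 {G : Type*} [CommGroup G] [Fintype G]
    (m : ℕ) (hm : Fintype.card G = m) (hm1 : 1 < m) (hcop : Nat.Coprime m 6)
    (g : G) (hg : ∀ x : G, x ∈ Subgroup.zpowers g) :
    letI u : MonoidAlgebra ℤ G :=
      1 - MonoidAlgebra.of ℤ G g + MonoidAlgebra.of ℤ G (g ^ 2)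
    IsUnit u ∧ (∑ x : G, u.coeff x) = 1 ∧
      ∃ c : G, (u ^ 2).coeff c ≠ ∑ d ∈ Finset.univ.filter (fun d : G => d ^ 2 = c), u.coeff d := by
  have h2m : ¬ (2 ∣ m) := by
    intro h
    have := Nat.dvd_gcd h (by norm_num : (2:ℕ) ∣ 6)
    rw [hcop] at this; omega
  have h3m : ¬ (3 ∣ m) := by
    intro h
    have := Nat.dvd_gcd h (by norm_num : (3:ℕ) ∣ 6)
    rw [hcop] at this; omega
  have hm5 : 5 ≤ m := by
    rcases Nat.lt_or_ge m 5 with h | h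
    · interval_cases m <;> omega
    · exact h
  have hord : orderOf g = m := by
    rw [← hm, ← Nat.card_eq_fintype_card]
    exact orderOf_eq_card_of_forall_mem_zpowers hg
  have hne : ∀ i j : ℕ, i < j → j < m → g ^ i ≠ g ^ j := by
    intro i j hij hjm h
    have hji : g ^ (j - i) = 1 := by
      have h1 : g ^ j = g ^ i * g ^ (j - i) := by
        rw [← pow_add]; congr 1; omega
      rw [← h] at h1
      exact (mul_eq_left.mp h1.symm)
    have hd := orderOf_dvd_of_pow_eq_one hji
    rw [hord] at hd
    have := Nat.le_of_dvd (by omega) hd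
    omega
  have hne02 : (1 : G) ≠ g ^ 2 := by
    simpa using hne 0 2 (by omega) (by omega)
  have hne12 : g ≠ g ^ 2 := by simpa using hne 1 2 (by omega) (by omega)
  have hne32 : g ^ 3 ≠ g ^ 2 := (hne 2 3 (by omega) (by omega)).symm
  have hne42 : g ^ 4 ≠ g ^ 2 := (hne 2 4 (by omega) (by omega)).symm
  have hne01 : (1 : G) ≠ g := by simpa using hne 0 1 (by omega) (by omega)
  have hne21 : g ^ 2 ≠ g := (hne12).symm
  set u : MonoidAlgebra ℤ G :=
      1 - MonoidAlgebra.of ℤ G g + MonoidAlgebra.of ℤ G (g ^ 2) with hudef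
  have husingle : u = MonoidAlgebra.single 1 1 - MonoidAlgebra.single g 1
      + MonoidAlgebra.single (g ^ 2) 1 := by
    rw [hudef, MonoidAlgebra.one_def, MonoidAlgebra.of_apply, MonoidAlgebra.of_apply]
  refine ⟨?_, ?_, ?_⟩
  · -- `u` is a unit
    open Polynomial in
    set a : MonoidAlgebra ℤ G := MonoidAlgebra.of ℤ G g with ha
    have hgm : g ^ m = 1 := by rw [← hm]; exact pow_card_eq_one
    have ham : a ^ m = 1 := by rw [ha, ← map_pow, hgm]; exact map_one _
    have hu : u = aeval a (X^2 - X + 1 : ℤ[X]) := by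
      rw [hudef]; simp [ha, map_pow]; ring
    rw [hu]
    have h6 : m % 6 = 1 ∨ m % 6 = 5 := by
      have hr : Nat.gcd (m % 6) 6 = 1 := by
        rw [← Nat.gcd_rec]; exact Nat.coprime_comm.mp hcop
      have h : m % 6 < 6 := Nat.mod_lt _ (by norm_num)
      interval_cases h' : (m % 6) <;> simp_all
    rcases h6 with h6 | h6
    · obtain ⟨k, hk⟩ : ∃ k, m = 6*k+1 := ⟨m / 6, by omega⟩
      obtain ⟨c, hc⟩ := phi_case1_aux k
      refine IsUnit.of_mul_eq_one (aeval a c) ?_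
      have hthis := congrArg (aeval a) hc
      simp only [map_add, map_sub, map_mul, map_pow, map_one, aeval_X] at hthis
      have hpow : a ^ (6*k+2) = a := by
        have h1 : a ^ (6*k+2) = a^m * a := by rw [hk]; ring
        rw [h1, ham, one_mul]
      rw [hpow] at hthis
      simp only [map_add, map_sub, map_pow, map_one, aeval_X]
      linear_combination -hthis
    · obtain ⟨k, hk⟩ : ∃ k, m = 6*k+5 := ⟨m / 6, by omega⟩
      obtain ⟨c, hc⟩ := phi_case5_aux k
      refine IsUnit.of_mul_eq_one (aeval a c) ?_
      have hthis := congrArg (aeval a) hc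
      simp only [map_add, map_sub, map_mul, map_pow, map_one, map_neg, aeval_X] at hthis
      have hp1 : a ^ (6*k+6) = a := by
        have h1 : a ^ (6*k+6) = a^m * a := by rw [hk]; ring
        rw [h1, ham, one_mul]
      have hp2 : a ^ (6*k+5) = 1 := by rw [← hk, ham]
      rw [hp1, hp2] at hthis
      simp only [map_add, map_sub, map_pow, map_one, aeval_X]
      linear_combination -hthis
  · -- augmentation is 1
    rw [husingle]
    simp only [MA_add_apply_aux, MA_sub_apply_aux, MA_single_apply_aux]
    rw [Finset.sum_add_distrib, Finset.sum_sub_distrib]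
    simp [Finset.sum_ite_eq]
  · -- PAP(2) fails at c = g²
    refine ⟨g ^ 2, ?_⟩
    have k1 : g * g = g ^ 2 := (sq g).symm
    have k2 : g * g ^ 2 = g ^ 3 := by group
    have k2' : g ^ 2 * g = g ^ 3 := by group
    have k3 : g ^ 2 * g ^ 2 = g ^ 4 := by group
    have hsq : u ^ 2 = MonoidAlgebra.single 1 1 - MonoidAlgebra.single g 1
        - MonoidAlgebra.single g 1
        + MonoidAlgebra.single (g^2) 1 + MonoidAlgebra.single (g^2) 1
        + MonoidAlgebra.single (g^2) 1
        - MonoidAlgebra.single (g^3) 1 - MonoidAlgebra.single (g^3) 1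
        + MonoidAlgebra.single (g^4) 1 := by
      rw [sq, husingle]
      simp only [sub_mul, mul_sub, add_mul, mul_add, MonoidAlgebra.single_mul_single,
        one_mul, mul_one, k1, k2, k2', k3]
      ring
    have hfilter : Finset.univ.filter (fun d : G => d ^ 2 = g ^ 2) = {g} := by
      ext d
      simp only [Finset.mem_filter, Finset.mem_univ, true_and, Finset.mem_singleton]
      constructor
      · intro hd
        have hdg : (d * g⁻¹) ^ 2 = 1 := by
          rw [mul_pow, hd, inv_pow, mul_inv_cancel]
        have hdvd2 := orderOf_dvd_of_pow_eq_one hdg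
        have hdvdm : orderOf (d * g⁻¹) ∣ m := by rw [← hm]; exact orderOf_dvd_card
        have hone : orderOf (d * g⁻¹) = 1 := by
          rcases (Nat.dvd_prime Nat.prime_two).mp hdvd2 with h | h
          · exact h
          · rw [h] at hdvdm; exact absurd hdvdm h2m
        have := orderOf_eq_one_iff.mp hone
        exact mul_inv_eq_one.mp this
      · rintro rfl; rfl
    rw [hfilter, hsq, husingle]
    simp only [MA_sub_apply_aux, MA_add_apply_aux, MA_single_apply_aux,
      Finset.sum_singleton]
    simp [hne02, hne12, hne32, hne42, hne01, hne21]

end
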